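/- L^p continuity of the analysis covariance map with a random argument: let Q be a random positive semidefinite operator, P ≥ 0 constant, R > 0, and c = |H|²|R^{-1}|. Then for 1 ≤ p < ∞, ‖A(Q) − A(P)‖_p ≤ (1 + c|P|)‖Q−P‖_p + (c + c²|P|)‖Q‖_{2p}‖Q−P‖_{2p}, where A(Q) = Q − Q H*(H Q H* + R)^{-1} H Q. -/

import Mathlib

open MeasureTheory ContinuousLinearMap RealInnerProductSpace
open scoped ENNReal NNReal

variable {V W : Type*} [NormedAddCommGroup V] [InnerProductSpace ℝ V] [CompleteSpace V]
  [NormedAddCommGroup W] [InnerProductSpace ℝ W] [CompleteSpace W]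

/-- The analysis covariance map `A(Q) = Q − Q H* (H Q H* + R)⁻¹ H Q`. -/
noncomputable def analysisCov (H : V →L[ℝ] W) (R : W →L[ℝ] W) (Q : V →L[ℝ] V) : V →L[ℝ] V :=
  Q - (Q ∘L ContinuousLinearMap.adjoint H) ∘L
    Ring.inverse (H ∘L Q ∘L ContinuousLinearMap.adjoint H + R) ∘L (H ∘L Q)

section Helpers

variable {X : Type*} [NormedAddCommGroup X] [InnerProductSpace ℝ X] [CompleteSpace X]

/-- Cauchy–Schwarz for a positive operator on a real Hilbert space. -/
lemma pos_inner_sq_le (T : X →L[ℝ] X) (hT : T.IsPositive) (x y : X) :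
    ⟪T x, y⟫ ^ 2 ≤ ⟪T x, x⟫ * ⟪T y, y⟫ := by
  have hsymm : ∀ a b : X, ⟪T a, b⟫ = ⟪a, T b⟫ := fun a b => by
    conv_lhs => rw [← hT.isSelfAdjoint.adjoint_eq]
    exact ContinuousLinearMap.adjoint_inner_left T b a
  have hpos : ∀ a : X, 0 ≤ ⟪T a, a⟫ := fun a => by
    simpa using hT.inner_nonneg_left a
  have key : ∀ t : ℝ, 0 ≤ ⟪T y, y⟫ * (t * t) + (2 * ⟪T x, y⟫) * t + ⟪T x, x⟫ := by
    intro t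
    have h0 := hpos (x + t • y)
    have hexp : ⟪T (x + t • y), x + t • y⟫
        = ⟪T y, y⟫ * (t * t) + (2 * ⟪T x, y⟫) * t + ⟪T x, x⟫ := by
      have hyx : ⟪T y, x⟫ = ⟪T x, y⟫ := by
        rw [hsymm y x, real_inner_comm]
      simp only [map_add, ContinuousLinearMap.map_smul, inner_add_left, inner_add_right,
        real_inner_smul_left, real_inner_smul_right, hyx]
      ring
    linarith [hexp ▸ h0]
  have hd := discrim_le_zero key
  rw [discrim] at hd
  nlinarith [hd]

/-- Norm bound for a positive operator from a quadratic-form bound. -/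
lemma pos_norm_le (T : X →L[ℝ] X) (hT : T.IsPositive) {M : ℝ} (hM : 0 ≤ M)
    (h : ∀ x, ⟪T x, x⟫ ≤ M * ‖x‖ ^ 2) : ‖T‖ ≤ M := by
  refine T.opNorm_le_bound hM fun x => ?_
  rcases eq_or_lt_of_le (norm_nonneg (T x)) with h0 | h0
  · rw [← h0]; positivity
  · have hcs := pos_inner_sq_le T hT x (T x)
    have h1 : ⟪T x, T x⟫ = ‖T x‖ ^ 2 := real_inner_self_eq_norm_sq (T x)
    have h2 := h x
    have h3 := h (T x)
    have hpos : ∀ a : X, 0 ≤ ⟪T a, a⟫ := fun a => by simpa using hT.inner_nonneg_left a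
    have h4 : (‖T x‖ ^ 2) ^ 2 ≤ (M * ‖x‖ ^ 2) * (M * ‖T x‖ ^ 2) := by
      calc (‖T x‖ ^ 2) ^ 2 = ⟪T x, T x⟫ ^ 2 := by rw [h1]
        _ ≤ ⟪T x, x⟫ * ⟪T (T x), T x⟫ := hcs
        _ ≤ (M * ‖x‖ ^ 2) * (M * ‖T x‖ ^ 2) := by
            apply mul_le_mul h2 h3 (hpos (T x)); positivity
    by_contra hcon
    push_neg at hcon
    have hb : 0 ≤ M * ‖x‖ := mul_nonneg hM (norm_nonneg x)
    nlinarith [h4, hb, h0, mul_pos h0 h0, mul_pos (mul_pos h0 h0) (sub_pos.mpr hcon)]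

/-- A coercive operator is a unit. -/
lemma coercive_isUnit (T : X →L[ℝ] X) {α : ℝ} (hα : 0 < α)
    (h : ∀ x, α * ‖x‖ ^ 2 ≤ ⟪T x, x⟫) : IsUnit T := by
  refine ContinuousLinearMap.isUnit_of_forall_le_norm_inner_map T
    (c := ⟨α, hα.le⟩) hα fun x => ?_
  have h1 := h x
  have h2 : 0 ≤ ⟪T x, x⟫ := le_trans (by positivity) h1
  calc ‖x‖ ^ 2 * (⟨α, hα.le⟩ : NNReal) = α * ‖x‖ ^ 2 := by
        simp [NNReal.coe_mk]; ring
    _ ≤ ⟪T x, x⟫ := h1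
    _ ≤ ‖(⟪T x, x⟫ : ℝ)‖ := le_abs_self _

lemma inverse_apply_cancel (T : X →L[ℝ] X) (hT : IsUnit T) (x : X) :
    T (Ring.inverse T x) = x := by
  have h := Ring.mul_inverse_cancel T hT
  calc T (Ring.inverse T x) = (T * Ring.inverse T) x := rfl
    _ = x := by rw [h]; rfl

lemma inverse_apply_cancel' (T : X →L[ℝ] X) (hT : IsUnit T) (x : X) :
    Ring.inverse T (T x) = x := by
  have h := Ring.inverse_mul_cancel T hT
  calc Ring.inverse T (T x) = (Ring.inverse T * T) x := rfl
    _ = x := by rw [h]; rfl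

lemma coercive_inverse_isSelfAdjoint (T : X →L[ℝ] X) (hTsa : IsSelfAdjoint T) :
    IsSelfAdjoint (Ring.inverse T) := by
  rw [IsSelfAdjoint, ← Ring.inverse_star, hTsa.star_eq]

lemma coercive_inverse_isPositive (T : X →L[ℝ] X) (hTsa : IsSelfAdjoint T) {α : ℝ}
    (hα : 0 < α) (h : ∀ x, α * ‖x‖ ^ 2 ≤ ⟪T x, x⟫) : (Ring.inverse T).IsPositive := by
  have hU := coercive_isUnit T hα h
  refine ⟨(coercive_inverse_isSelfAdjoint T hTsa).isSymmetric, fun u => ?_⟩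
  have key : ⟪Ring.inverse T u, u⟫ = ⟪T (Ring.inverse T u), Ring.inverse T u⟫ := by
    have h1 := inverse_apply_cancel T hU u
    calc ⟪Ring.inverse T u, u⟫ = ⟪Ring.inverse T u, T (Ring.inverse T u)⟫ := by rw [h1]
      _ = ⟪T (Ring.inverse T u), Ring.inverse T u⟫ := real_inner_comm _ _
  have h2 : 0 ≤ ⟪T (Ring.inverse T u), Ring.inverse T u⟫ :=
    le_trans (by positivity) (h _)
  simpa [ContinuousLinearMap.reApplyInnerSelf, key] using h2

/-- Monotonicity of the inverse quadratic form. -/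
lemma inverse_inner_le (Rop S : X →L[ℝ] X) (hRsa : IsSelfAdjoint Rop) (hSsa : IsSelfAdjoint S)
    {α : ℝ} (hα : 0 < α) (hR : ∀ x, α * ‖x‖ ^ 2 ≤ ⟪Rop x, x⟫)
    (hRS : ∀ x, ⟪Rop x, x⟫ ≤ ⟪S x, x⟫) (u : X) :
    ⟪Ring.inverse S u, u⟫ ≤ ⟪Ring.inverse Rop u, u⟫ := by
  have hS : ∀ x, α * ‖x‖ ^ 2 ≤ ⟪S x, x⟫ := fun x => (hR x).trans (hRS x)
  have hRU := coercive_isUnit Rop hα hR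
  have hSU := coercive_isUnit S hα hS
  have hRpos : Rop.IsPositive := ⟨hRsa.isSymmetric, fun x => by
    simpa [ContinuousLinearMap.reApplyInnerSelf] using le_trans (by positivity) (hR x)⟩
  set x := Ring.inverse S u with hx
  set y := Ring.inverse Rop u with hy
  have hSx : S x = u := inverse_apply_cancel S hSU u
  have hRy : Rop y = u := inverse_apply_cancel Rop hRU u
  have ha : ⟪Ring.inverse S u, u⟫ = ⟪S x, x⟫ := by
    rw [hSx]; rw [real_inner_comm]
  have hb : ⟪Ring.inverse Rop u, u⟫ = ⟪Rop y, y⟫ := by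
    rw [hRy]; rw [real_inner_comm]
  rw [ha, hb]
  have ha0 : 0 ≤ ⟪S x, x⟫ := le_trans (by positivity) (hS x)
  have hb0 : 0 ≤ ⟪Rop y, y⟫ := le_trans (by positivity) (hR y)
  -- ⟪S x, x⟫ = ⟪u, x⟫ = ⟪R y, x⟫, Cauchy--Schwarz for R
  have hcs : ⟪Rop y, x⟫ ^ 2 ≤ ⟪Rop y, y⟫ * ⟪Rop x, x⟫ := pos_inner_sq_le Rop hRpos y x
  have heq : ⟪S x, x⟫ = ⟪Rop y, x⟫ := by rw [hSx, hRy]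
  have hkey : ⟪S x, x⟫ ^ 2 ≤ ⟪Rop y, y⟫ * ⟪S x, x⟫ := by
    calc ⟪S x, x⟫ ^ 2 = ⟪Rop y, x⟫ ^ 2 := by rw [heq]
      _ ≤ ⟪Rop y, y⟫ * ⟪Rop x, x⟫ := hcs
      _ ≤ ⟪Rop y, y⟫ * ⟪S x, x⟫ := by
          exact mul_le_mul_of_nonneg_left (hRS x) hb0
  nlinarith [hkey, ha0, hb0]

/-- Norm comparison of inverses. -/
lemma inverse_norm_le (Rop S : X →L[ℝ] X) (hRsa : IsSelfAdjoint Rop) (hSsa : IsSelfAdjoint S)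
    {α : ℝ} (hα : 0 < α) (hR : ∀ x, α * ‖x‖ ^ 2 ≤ ⟪Rop x, x⟫)
    (hRS : ∀ x, ⟪Rop x, x⟫ ≤ ⟪S x, x⟫) :
    ‖(Ring.inverse S : X →L[ℝ] X)‖ ≤ ‖(Ring.inverse Rop : X →L[ℝ] X)‖ := by
  have hS : ∀ x, α * ‖x‖ ^ 2 ≤ ⟪S x, x⟫ := fun x => (hR x).trans (hRS x)
  refine pos_norm_le _ (coercive_inverse_isPositive S hSsa hα hS) (norm_nonneg _)
    fun u => ?_
  calc ⟪Ring.inverse S u, u⟫ ≤ ⟪Ring.inverse Rop u, u⟫ :=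
        inverse_inner_le Rop S hRsa hSsa hα hR hRS u
    _ ≤ ‖Ring.inverse Rop u‖ * ‖u‖ := real_inner_le_norm _ _
    _ ≤ (‖(Ring.inverse Rop : X →L[ℝ] X)‖ * ‖u‖) * ‖u‖ := by
        gcongr; exact (Ring.inverse Rop).le_opNorm u
    _ = ‖(Ring.inverse Rop : X →L[ℝ] X)‖ * ‖u‖ ^ 2 := by ring



section Pointwise

variable (H : V →L[ℝ] W) (R : W →L[ℝ] W)

lemma SQ_coercive {α : ℝ} (hα : 0 < α) (hR : ∀ u : W, α * ‖u‖ ^ 2 ≤ ⟪R u, u⟫)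
    {Q : V →L[ℝ] V} (hQ : Q.IsPositive) (u : W) :
    α * ‖u‖ ^ 2 ≤ ⟪(H ∘L Q ∘L ContinuousLinearMap.adjoint H + R) u, u⟫ := by
  have hpos : 0 ≤ ⟪(H ∘L Q ∘L ContinuousLinearMap.adjoint H) u, u⟫ := by
    simpa using (hQ.conj_adjoint H).inner_nonneg_left u
  have : ⟪(H ∘L Q ∘L ContinuousLinearMap.adjoint H + R) u, u⟫
      = ⟪(H ∘L Q ∘L ContinuousLinearMap.adjoint H) u, u⟫ + ⟪R u, u⟫ := by
    rw [ContinuousLinearMap.add_apply, inner_add_left]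
  linarith [hR u]

lemma SQ_selfAdjoint (hRsym : IsSelfAdjoint R) {Q : V →L[ℝ] V} (hQ : Q.IsPositive) :
    IsSelfAdjoint (H ∘L Q ∘L ContinuousLinearMap.adjoint H + R) :=
  (hQ.conj_adjoint H).isSelfAdjoint.add hRsym

lemma SQ_inverse_norm_le (hRsym : IsSelfAdjoint R)
    (hRpos : ∃ α : ℝ, 0 < α ∧ ∀ u : W, α * ‖u‖ ^ 2 ≤ ⟪R u, u⟫)
    {Q : V →L[ℝ] V} (hQ : Q.IsPositive) :
    ‖(Ring.inverse (H ∘L Q ∘L ContinuousLinearMap.adjoint H + R) : W →L[ℝ] W)‖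
      ≤ ‖(Ring.inverse R : W →L[ℝ] W)‖ := by
  obtain ⟨α, hα, hR⟩ := hRpos
  refine inverse_norm_le R _ hRsym (SQ_selfAdjoint H R hRsym hQ) hα hR fun u => ?_
  have hpos : 0 ≤ ⟪(H ∘L Q ∘L ContinuousLinearMap.adjoint H) u, u⟫ := by
    simpa using (hQ.conj_adjoint H).inner_nonneg_left u
  have : ⟪(H ∘L Q ∘L ContinuousLinearMap.adjoint H + R) u, u⟫
      = ⟪(H ∘L Q ∘L ContinuousLinearMap.adjoint H) u, u⟫ + ⟪R u, u⟫ := by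
    rw [ContinuousLinearMap.add_apply, inner_add_left]
  linarith

end Pointwise

lemma norm_comp₃_le {E F G K : Type*} [NormedAddCommGroup E] [NormedAddCommGroup F]
    [NormedAddCommGroup G] [NormedAddCommGroup K] [NormedSpace ℝ E] [NormedSpace ℝ F]
    [NormedSpace ℝ G] [NormedSpace ℝ K] (A : G →L[ℝ] K) (B : F →L[ℝ] G) (C : E →L[ℝ] F) :
    ‖A ∘L B ∘L C‖ ≤ ‖A‖ * ‖B‖ * ‖C‖ := by
  calc ‖A ∘L B ∘L C‖ ≤ ‖A‖ * ‖B ∘L C‖ := ContinuousLinearMap.opNorm_comp_le _ _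
    _ ≤ ‖A‖ * (‖B‖ * ‖C‖) := by
        gcongr
        exact ContinuousLinearMap.opNorm_comp_le _ _
    _ = _ := (mul_assoc _ _ _).symm

lemma norm_adjoint' (H : V →L[ℝ] W) : ‖(ContinuousLinearMap.adjoint H : W →L[ℝ] V)‖ = ‖H‖ :=
  LinearIsometryEquiv.norm_map ContinuousLinearMap.adjoint H

set_option maxHeartbeats 1000000 in
lemma pointwise_bound (H : V →L[ℝ] W) (R : W →L[ℝ] W)
    (hRsym : IsSelfAdjoint R)
    (hRpos : ∃ α : ℝ, 0 < α ∧ ∀ u : W, α * ‖u‖ ^ 2 ≤ ⟪R u, u⟫)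
    {P Q0 : V →L[ℝ] V} (hP : P.IsPositive) (hQ : Q0.IsPositive) :
    ‖analysisCov H R Q0 - analysisCov H R P‖
      ≤ (1 + (‖H‖ ^ 2 * ‖(Ring.inverse R : W →L[ℝ] W)‖) * ‖P‖) * ‖Q0 - P‖
        + ((‖H‖ ^ 2 * ‖(Ring.inverse R : W →L[ℝ] W)‖)
            + (‖H‖ ^ 2 * ‖(Ring.inverse R : W →L[ℝ] W)‖) ^ 2 * ‖P‖) * ‖Q0‖ * ‖Q0 - P‖ := by
  obtain ⟨α, hα, hR⟩ := hRpos
  set Ht := (ContinuousLinearMap.adjoint H : W →L[ℝ] V) with hHt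
  set SQ := H ∘L Q0 ∘L Ht + R with hSQ
  set SP := H ∘L P ∘L Ht + R with hSP
  have hSQu : IsUnit SQ := coercive_isUnit SQ hα (SQ_coercive H R hα hR hQ)
  have hSPu : IsUnit SP := coercive_isUnit SP hα (SQ_coercive H R hα hR hP)
  set iQ := (Ring.inverse SQ : W →L[ℝ] W) with hiQdef
  set iP := (Ring.inverse SP : W →L[ℝ] W) with hiPdef
  set r := ‖(Ring.inverse R : W →L[ℝ] W)‖ with hrdef
  have hr0 : 0 ≤ r := norm_nonneg _
  have hiQ : ‖iQ‖ ≤ r := SQ_inverse_norm_le H R hRsym ⟨α, hα, hR⟩ hQ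
  have hiP : ‖iP‖ ≤ r := SQ_inverse_norm_le H R hRsym ⟨α, hα, hR⟩ hP
  have hdiff : iQ - iP = iQ ∘L (SP - SQ) ∘L iP := by
    have h1 : iQ * SQ = 1 := Ring.inverse_mul_cancel SQ hSQu
    have h2 : SP * iP = 1 := Ring.mul_inverse_cancel SP hSPu
    have : iQ - iP = iQ * (SP * iP) - (iQ * SQ) * iP := by rw [h1, h2]; simp [mul_one, one_mul]
    rw [this]
    have : iQ * (SP * iP) - iQ * SQ * iP = iQ * (SP - SQ) * iP := by noncomm_ring
    rw [this]
    rfl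
  have hSPSQ : SP - SQ = H ∘L ((P - Q0) ∘L Ht) := by
    rw [hSP, hSQ]
    simp only [ContinuousLinearMap.comp_sub, ContinuousLinearMap.sub_comp]
    abel
  set T1 := ((Q0 - P) ∘L Ht) ∘L iQ ∘L (H ∘L Q0) with hT1
  set T2 := (P ∘L Ht) ∘L (iQ - iP) ∘L (H ∘L Q0) with hT2
  set T3 := (P ∘L Ht) ∘L iP ∘L (H ∘L (Q0 - P)) with hT3
  have hmain : analysisCov H R Q0 - analysisCov H R P = (Q0 - P) - (T1 + T2 + T3) := by
    rw [hT1, hT2, hT3]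
    simp only [analysisCov, ← hHt, ← hSQ, ← hSP, ← hiQdef, ← hiPdef]
    ext v
    simp only [ContinuousLinearMap.sub_apply, ContinuousLinearMap.add_apply,
      ContinuousLinearMap.comp_apply, map_sub]
    abel
  have b1 : ‖T1‖ ≤ (‖Q0 - P‖ * ‖H‖) * r * (‖H‖ * ‖Q0‖) := by
    refine (norm_comp₃_le _ _ _).trans ?_
    gcongr
    · exact (ContinuousLinearMap.opNorm_comp_le _ _).trans (by rw [norm_adjoint' H])
    · exact ContinuousLinearMap.opNorm_comp_le _ _
  have b2 : ‖T2‖ ≤ (‖P‖ * ‖H‖) * (r * (‖H‖ * ‖Q0 - P‖ * ‖H‖) * r) * (‖H‖ * ‖Q0‖) := by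
    rw [hT2, hdiff, hSPSQ]
    refine (norm_comp₃_le _ _ _).trans ?_
    gcongr
    · exact (ContinuousLinearMap.opNorm_comp_le _ _).trans (by rw [norm_adjoint' H])
    · refine (norm_comp₃_le _ _ _).trans ?_
      gcongr
      refine (ContinuousLinearMap.opNorm_comp_le _ _).trans ?_
      have : ‖(P - Q0) ∘L Ht‖ ≤ ‖Q0 - P‖ * ‖H‖ := by
        refine (ContinuousLinearMap.opNorm_comp_le _ _).trans ?_
        rw [norm_adjoint' H, norm_sub_rev]
      calc ‖H‖ * ‖(P - Q0) ∘L Ht‖ ≤ ‖H‖ * (‖Q0 - P‖ * ‖H‖) := by gcongr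
        _ = ‖H‖ * ‖Q0 - P‖ * ‖H‖ := by ring
    · exact ContinuousLinearMap.opNorm_comp_le _ _
  have b3 : ‖T3‖ ≤ (‖P‖ * ‖H‖) * r * (‖H‖ * ‖Q0 - P‖) := by
    refine (norm_comp₃_le _ _ _).trans ?_
    gcongr
    · exact (ContinuousLinearMap.opNorm_comp_le _ _).trans (by rw [norm_adjoint' H])
    · exact ContinuousLinearMap.opNorm_comp_le _ _
  have htri : ‖analysisCov H R Q0 - analysisCov H R P‖
      ≤ ‖Q0 - P‖ + (‖T1‖ + ‖T2‖ + ‖T3‖) := by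
    rw [hmain]
    refine (norm_sub_le _ _).trans ?_
    gcongr
    exact (norm_add_le _ _).trans (by gcongr; exact norm_add_le _ _)
  have hH0 : (0:ℝ) ≤ ‖H‖ := norm_nonneg _
  have hP0 : (0:ℝ) ≤ ‖P‖ := norm_nonneg _
  have hQ0' : (0:ℝ) ≤ ‖Q0‖ := norm_nonneg _
  have hQP0 : (0:ℝ) ≤ ‖Q0 - P‖ := norm_nonneg _
  nlinarith [htri, b1, b2, b3]

lemma aesm_analysisCov {Ωs : Type*} [MeasurableSpace Ωs] (μ : MeasureTheory.Measure Ωs)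
    (H : V →L[ℝ] W) (R : W →L[ℝ] W)
    (hRpos : ∃ α : ℝ, 0 < α ∧ ∀ u : W, α * ‖u‖ ^ 2 ≤ ⟪R u, u⟫)
    {Q : Ωs → V →L[ℝ] V} (hQpos : ∀ᵐ ω ∂μ, (Q ω).IsPositive)
    (hQm : AEStronglyMeasurable Q μ) :
    AEStronglyMeasurable (fun ω => analysisCov H R (Q ω)) μ := by
  classical
  obtain ⟨α, hα, hR⟩ := hRpos
  obtain ⟨Q', hQ'sm, hQQ'⟩ := hQm
  borelize (V →L[ℝ] V)
  set Ht := (ContinuousLinearMap.adjoint H : W →L[ℝ] V) with hHtdef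
  set s : Set (V →L[ℝ] V) := {M | IsUnit (H ∘L M ∘L Ht + R)} with hs
  have hgcont : Continuous fun M : V →L[ℝ] V => H ∘L M ∘L Ht + R := by
    have h1 : Continuous fun M : V →L[ℝ] V => M ∘L Ht :=
      Continuous.clm_comp continuous_id continuous_const
    exact (Continuous.clm_comp continuous_const h1).add continuous_const
  have hs_open : IsOpen s := Units.isOpen.preimage hgcont
  have hs_meas : MeasurableSet s := hs_open.measurableSet
  have hinv : ContinuousOn
      (fun M : V →L[ℝ] V => Ring.inverse (H ∘L M ∘L Ht + R)) s := by
    intro M hM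
    have h1 : ContinuousAt (Ring.inverse : (W →L[ℝ] W) → W →L[ℝ] W)
        (H ∘L M ∘L Ht + R) := by
      have := NormedRing.inverse_continuousAt (hM.unit)
      rwa [IsUnit.unit_spec] at this
    have h2 := ContinuousAt.comp (g := (Ring.inverse : (W →L[ℝ] W) → W →L[ℝ] W))
      (f := fun M : V →L[ℝ] V => H ∘L M ∘L Ht + R) (x := M) h1 hgcont.continuousAt
    exact h2.continuousWithinAt
  have hφ : ContinuousOn (fun M => analysisCov H R M) s := by
    have h2 : ContinuousOn
        (fun M : V →L[ℝ] V => (Ring.inverse (H ∘L M ∘L Ht + R)) ∘L (H ∘L M)) s :=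
      hinv.clm_comp (Continuous.clm_comp continuous_const continuous_id).continuousOn
    have h3 : ContinuousOn (fun M : V →L[ℝ] V =>
        (M ∘L Ht) ∘L ((Ring.inverse (H ∘L M ∘L Ht + R)) ∘L (H ∘L M))) s :=
      ContinuousOn.clm_comp (Continuous.clm_comp continuous_id continuous_const).continuousOn h2
    exact continuousOn_id.sub h3
  have hQmem : ∀ᵐ ω ∂μ, Q ω ∈ s :=
    hQpos.mono fun ω h => coercive_isUnit _ hα (SQ_coercive H R hα hR h)
  have h0mem : (0 : V →L[ℝ] V) ∈ s := by
    have h0 : H ∘L (0 : V →L[ℝ] V) ∘L Ht + R = R := by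
      simp
    rw [hs]
    simp only [Set.mem_setOf_eq, h0]
    exact coercive_isUnit R hα hR
  set A := Q' ⁻¹' s with hA
  have hQ'meas : Measurable Q' := hQ'sm.measurable
  have hAmeas : MeasurableSet A := hQ'meas hs_meas
  set Q'' := A.piecewise Q' (fun _ => 0) with hQ''
  have hQ''sm : StronglyMeasurable Q'' := hQ'sm.piecewise hAmeas stronglyMeasurable_const
  have hQ''mem : ∀ ω, Q'' ω ∈ s := by
    intro ω; by_cases h : ω ∈ A
    · rw [hQ'', Set.piecewise_eq_of_mem _ _ _ h]; exact h
    · rw [hQ'', Set.piecewise_eq_of_notMem _ _ _ h]; exact h0mem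
  have hcomp_sm : StronglyMeasurable (fun ω => analysisCov H R (Q'' ω)) := by
    rw [stronglyMeasurable_iff_measurable_separable]
    constructor
    · have hφ' : Measurable (s.piecewise (fun M => analysisCov H R M) (fun _ => 0)) :=
        ContinuousOn.measurable_piecewise hφ continuousOn_const hs_meas
      have heq : (fun ω => analysisCov H R (Q'' ω))
          = (s.piecewise (fun M => analysisCov H R M) (fun _ => 0)) ∘ Q'' := by
        funext ω
        simp [Function.comp, Set.piecewise_eq_of_mem _ _ _ (hQ''mem ω)]
      rw [heq]; exact hφ'.comp hQ''sm.measurable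
    · have hr1 : TopologicalSpace.IsSeparable (Set.range Q'') := by
        apply TopologicalSpace.IsSeparable.mono
          (hQ'sm.isSeparable_range.union
            (Set.finite_singleton (0 : V →L[ℝ] V)).isSeparable)
        rintro x ⟨ω, rfl⟩
        by_cases h : ω ∈ A
        · left
          simp only [hQ'', Set.piecewise_eq_of_mem _ _ _ h]
          exact Set.mem_range_self ω
        · right
          simp only [hQ'', Set.piecewise_eq_of_notMem _ _ _ h]
          exact Set.mem_singleton _
      have hsub : Set.range (fun ω => analysisCov H R (Q'' ω))
          ⊆ (fun M => analysisCov H R M) '' (Set.range Q'') := by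
        rintro x ⟨ω, rfl⟩; exact ⟨Q'' ω, Set.mem_range_self ω, rfl⟩
      exact (((hφ.mono (Set.range_subset_iff.mpr hQ''mem)).isSeparable_image hr1).mono hsub)
  refine ⟨fun ω => analysisCov H R (Q'' ω), hcomp_sm, ?_⟩
  filter_upwards [hQQ', hQmem] with ω h1 h2
  have hωA : ω ∈ A := by
    rw [hA]; simp only [Set.mem_preimage]; rw [← h1]; exact h2
  have : Q'' ω = Q ω := by
    rw [hQ'', Set.piecewise_eq_of_mem _ _ _ hωA, ← h1]
  rw [this]



end Helpers

set_option maxHeartbeats 1000000 in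
/-- `Lᵖ` continuity of the analysis covariance map with a random argument: if `Q` is a
random operator with `Q ≥ 0` a.s., `P ≥ 0` constant, `R > 0`, and `c = |H|²|R⁻¹|`, then
`‖A(Q) − A(P)‖_p ≤ (1 + c|P|)‖Q−P‖_p + (c + c²|P|)‖Q‖_{2p}‖Q−P‖_{2p}`. -/
theorem lp_analysisCov_continuity
    {Ωs : Type*} [MeasurableSpace Ωs] (μ : Measure Ωs) [IsProbabilityMeasure μ]
    (H : V →L[ℝ] W) (R : W →L[ℝ] W) (P : V →L[ℝ] V) (Q : Ωs → V →L[ℝ] V)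
    (hP : P.IsPositive) (hQpos : ∀ᵐ ω ∂μ, (Q ω).IsPositive)
    (hRsym : IsSelfAdjoint R)
    (hRpos : ∃ α : ℝ, 0 < α ∧ ∀ u : W, α * ‖u‖ ^ 2 ≤ ⟪R u, u⟫)
    (p : ℝ) (hp : 1 ≤ p)
    (hQmom : MemLp Q (ENNReal.ofReal (2 * p)) μ) :
    (∫ ω, ‖analysisCov H R (Q ω) - analysisCov H R P‖ ^ p ∂μ) ^ (1 / p)
      ≤ (1 + (‖H‖ ^ 2 * ‖(Ring.inverse R : W →L[ℝ] W)‖) * ‖P‖) *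
          (∫ ω, ‖Q ω - P‖ ^ p ∂μ) ^ (1 / p)
        + ((‖H‖ ^ 2 * ‖(Ring.inverse R : W →L[ℝ] W)‖)
            + (‖H‖ ^ 2 * ‖(Ring.inverse R : W →L[ℝ] W)‖) ^ 2 * ‖P‖) *
          (∫ ω, ‖Q ω‖ ^ (2 * p) ∂μ) ^ (1 / (2 * p)) *
          (∫ ω, ‖Q ω - P‖ ^ (2 * p) ∂μ) ^ (1 / (2 * p)) := by
  have hp0 : 0 < p := lt_of_lt_of_le one_pos hp
  have h2p0 : 0 < 2 * p := by linarith
  set q : ENNReal := ENNReal.ofReal p with hqdef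
  set q2 : ENNReal := ENNReal.ofReal (2 * p) with hq2def
  have hq_ne0 : q ≠ 0 := by simp [hqdef, ENNReal.ofReal_eq_zero, not_le, hp0]
  have hq2_ne0 : q2 ≠ 0 := by simp [hq2def, ENNReal.ofReal_eq_zero, not_le, h2p0, hp0]
  have hq_neT : q ≠ ∞ := ENNReal.ofReal_ne_top
  have hq2_neT : q2 ≠ ∞ := ENNReal.ofReal_ne_top
  have hq_toReal : q.toReal = p := ENNReal.toReal_ofReal hp0.le
  have hq2_toReal : q2.toReal = 2 * p := ENNReal.toReal_ofReal h2p0.le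
  have hq_le : q ≤ q2 := ENNReal.ofReal_le_ofReal (by linarith)
  have hone_le_q : 1 ≤ q := by
    rw [hqdef, ← ENNReal.ofReal_one]; exact ENNReal.ofReal_le_ofReal hp
  set c := ‖H‖ ^ 2 * ‖(Ring.inverse R : W →L[ℝ] W)‖ with hcdef
  have hc0 : 0 ≤ c := by positivity
  set A1 := 1 + c * ‖P‖ with hA1def
  set A2 := c + c ^ 2 * ‖P‖ with hA2def
  have hA10 : 0 ≤ A1 := by positivity
  have hA20 : 0 ≤ A2 := by positivity
  have hQm : AEStronglyMeasurable Q μ := hQmom.1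
  set F := fun ω => analysisCov H R (Q ω) - analysisCov H R P with hFdef
  set G1 := fun ω => Q ω - P with hG1def
  have hG1mom2 : MemLp G1 q2 μ := hQmom.sub (memLp_const P)
  have hG1mom : MemLp G1 q μ := hG1mom2.mono_exponent hq_le
  have hpqr : 1 / q = 1 / q2 + 1 / q2 := by
    rw [hqdef, hq2def, one_div, one_div, ← ENNReal.ofReal_inv_of_pos hp0,
      ← ENNReal.ofReal_inv_of_pos h2p0, ← ENNReal.ofReal_add (by positivity) (by positivity)]
    congr 1
    field_simp
    ring
  haveI hHT : ENNReal.HolderTriple q2 q2 q := ⟨by simpa only [one_div] using hpqr.symm⟩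
  have hmul : MemLp (fun ω => ‖Q ω‖ * ‖Q ω - P‖) q μ := by
    have := MemLp.smul (𝕜 := ℝ) (r := q) (hG1mom2.norm) (hQmom.norm)
    exact this
  have hbound : ∀ᵐ ω ∂μ, ‖F ω‖ ≤ A1 * ‖Q ω - P‖ + A2 * (‖Q ω‖ * ‖Q ω - P‖) := by
    filter_upwards [hQpos] with ω h
    have := pointwise_bound H R hRsym hRpos hP h
    rw [hFdef]
    calc ‖analysisCov H R (Q ω) - analysisCov H R P‖
        ≤ (1 + c * ‖P‖) * ‖Q ω - P‖ + (c + c ^ 2 * ‖P‖) * ‖Q ω‖ * ‖Q ω - P‖ := this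
      _ = A1 * ‖Q ω - P‖ + A2 * (‖Q ω‖ * ‖Q ω - P‖) := by rw [hA1def, hA2def]; ring
  set g1 := fun ω => A1 * ‖Q ω - P‖ with hg1def
  set g2 := fun ω => A2 * (‖Q ω‖ * ‖Q ω - P‖) with hg2def
  have hg1mom : MemLp g1 q μ := hG1mom.norm.const_mul A1
  have hg2mom : MemLp g2 q μ := hmul.const_mul A2
  have hgmom : MemLp (fun ω => g1 ω + g2 ω) q μ := hg1mom.add hg2mom
  have hbound' : ∀ᵐ ω ∂μ, ‖F ω‖ ≤ ‖g1 ω + g2 ω‖ := by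
    filter_upwards [hbound] with ω h
    exact h.trans (le_abs_self _)
  have hFm : AEStronglyMeasurable F μ :=
    (aesm_analysisCov μ H R hRpos hQpos hQm).sub aestronglyMeasurable_const
  have hFmom : MemLp F q μ := MemLp.of_le hgmom hFm hbound'
  -- eLpNorm chain
  have e1 : eLpNorm F q μ ≤ eLpNorm (fun ω => g1 ω + g2 ω) q μ := eLpNorm_mono_ae hbound'
  have e2 : eLpNorm (fun ω => g1 ω + g2 ω) q μ ≤ eLpNorm g1 q μ + eLpNorm g2 q μ :=
    eLpNorm_add_le hg1mom.1 hg2mom.1 hone_le_q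
  have e3 : eLpNorm g1 q μ = ENNReal.ofReal A1 * eLpNorm G1 q μ := by
    have : g1 = A1 • (fun ω => ‖G1 ω‖) := by
      funext ω; simp [hg1def, hG1def, smul_eq_mul]
    rw [this, eLpNorm_const_smul, eLpNorm_norm, Real.enorm_eq_ofReal hA10]
  have e4 : eLpNorm (fun ω => ‖Q ω‖ * ‖Q ω - P‖) q μ ≤ eLpNorm Q q2 μ * eLpNorm G1 q2 μ := by
    have h := eLpNorm_le_eLpNorm_mul_eLpNorm'_of_norm (μ := μ) (p := q2) (q := q2) (r := q)
      hQm hG1mom2.1 (fun (a : V →L[ℝ] V) (b : V →L[ℝ] V) => ‖a‖ * ‖b‖) 1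
      (Filter.Eventually.of_forall fun ω => by
        rw [NNReal.coe_one, one_mul, norm_mul, norm_norm, norm_norm])
    rw [ENNReal.coe_one, one_mul] at h
    exact h
  have e5 : eLpNorm g2 q μ ≤ ENNReal.ofReal A2 * (eLpNorm Q q2 μ * eLpNorm G1 q2 μ) := by
    have heq : g2 = A2 • (fun ω => ‖Q ω‖ * ‖Q ω - P‖) := by
      funext ω; simp [hg2def, smul_eq_mul]
    calc eLpNorm g2 q μ = ENNReal.ofReal A2 * eLpNorm (fun ω => ‖Q ω‖ * ‖Q ω - P‖) q μ := by
          rw [heq, eLpNorm_const_smul, Real.enorm_eq_ofReal hA20]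
      _ ≤ ENNReal.ofReal A2 * (eLpNorm Q q2 μ * eLpNorm G1 q2 μ) := by gcongr
  have echain : eLpNorm F q μ
      ≤ ENNReal.ofReal A1 * eLpNorm G1 q μ
        + ENNReal.ofReal A2 * (eLpNorm Q q2 μ * eLpNorm G1 q2 μ) := by
    refine e1.trans (e2.trans ?_)
    rw [e3]
    exact add_le_add le_rfl e5
  -- finiteness of RHS
  have hfin1 : eLpNorm G1 q μ ≠ ∞ := hG1mom.eLpNorm_ne_top
  have hfin2 : eLpNorm Q q2 μ ≠ ∞ := hQmom.eLpNorm_ne_top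
  have hfin3 : eLpNorm G1 q2 μ ≠ ∞ := hG1mom2.eLpNorm_ne_top
  have hBne : ENNReal.ofReal A1 * eLpNorm G1 q μ
      + ENNReal.ofReal A2 * (eLpNorm Q q2 μ * eLpNorm G1 q2 μ) ≠ ∞ := by
    apply ENNReal.add_ne_top.2
    constructor
    · exact ENNReal.mul_ne_top ENNReal.ofReal_ne_top hfin1
    · exact ENNReal.mul_ne_top ENNReal.ofReal_ne_top (ENNReal.mul_ne_top hfin2 hfin3)
  have hmono := ENNReal.toReal_mono hBne echain
  -- convert toReal to integrals
  have hFint : 0 ≤ ∫ ω, ‖F ω‖ ^ p ∂μ := integral_nonneg fun ω => by positivity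
  have key : ∀ {f : Ωs → V →L[ℝ] V} {qq : ENNReal} (hf : MemLp f qq μ) (hqq0 : qq ≠ 0)
      (hqqT : qq ≠ ∞), (eLpNorm f qq μ).toReal = (∫ ω, ‖f ω‖ ^ qq.toReal ∂μ) ^ (qq.toReal)⁻¹ := by
    intro f qq hf hqq0 hqqT
    rw [hf.eLpNorm_eq_integral_rpow_norm hqq0 hqqT, ENNReal.toReal_ofReal]
    have : 0 ≤ ∫ ω, ‖f ω‖ ^ qq.toReal ∂μ := integral_nonneg fun ω => by positivity
    positivity
  have kF := key hFmom hq_ne0 hq_neT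
  have kG1 := key hG1mom hq_ne0 hq_neT
  have kQ := key hQmom hq2_ne0 hq2_neT
  have kG12 := key hG1mom2 hq2_ne0 hq2_neT
  rw [hq_toReal] at kF kG1
  rw [hq2_toReal] at kQ kG12
  rw [ENNReal.toReal_add (ENNReal.mul_ne_top ENNReal.ofReal_ne_top hfin1)
      (ENNReal.mul_ne_top ENNReal.ofReal_ne_top (ENNReal.mul_ne_top hfin2 hfin3)),
    ENNReal.toReal_mul, ENNReal.toReal_mul, ENNReal.toReal_mul,
    ENNReal.toReal_ofReal hA10, ENNReal.toReal_ofReal hA20, kF, kG1, kQ, kG12] at hmono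
  calc (∫ ω, ‖analysisCov H R (Q ω) - analysisCov H R P‖ ^ p ∂μ) ^ (1 / p)
      = (∫ ω, ‖F ω‖ ^ p ∂μ) ^ p⁻¹ := by rw [one_div]
    _ ≤ A1 * (∫ ω, ‖G1 ω‖ ^ p ∂μ) ^ p⁻¹
        + A2 * ((∫ ω, ‖Q ω‖ ^ (2 * p) ∂μ) ^ (2 * p)⁻¹ * (∫ ω, ‖G1 ω‖ ^ (2 * p) ∂μ) ^ (2 * p)⁻¹) :=
        hmono
    _ = A1 * (∫ ω, ‖Q ω - P‖ ^ p ∂μ) ^ (1 / p)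
        + A2 * (∫ ω, ‖Q ω‖ ^ (2 * p) ∂μ) ^ (1 / (2 * p)) *
          (∫ ω, ‖Q ω - P‖ ^ (2 * p) ∂μ) ^ (1 / (2 * p)) := by
        simp only [hG1def, one_div]
        ring
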